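/- Let p be a prime, and k, d, r ≥ 1 integers, and let s_1,…,s_d ≥ 1. Then the difference (p^k)^{s_1+⋯+s_d} · H_{p^k}(s_d,…,s_1) − ∑ over all tuples (v_i, q_i, r_i)_{i=1,…,d} with v_i ∈ {0,…,k−1}, q_i ≥ 0, r_i ∈ {1,…,p−1} satisfying 0 < p^{v_1}(pq_1+r_1) < ⋯ < p^{v_d}(pq_d+r_d) < p^k, of ∏_{i=1}^d (p^{k−v_i})^{s_i} · (pq_i+r_i)^{p^{r−1}(p−1) − s_i} (an integer power, taken in ℚ_p, of the p-adic unit pq_i+r_i; the sum is finite) has p-adic valuation at least r. -/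

import Mathlib

open Finset

/-- The finite set of strictly increasing chains `0 < n_1 < ⋯ < n_d < N` of natural numbers. -/
def chainsN (d N : ℕ) : Finset (Fin d → ℕ) :=
  (Fintype.piFinset fun _ : Fin d => Finset.Ioo 0 N).filter
    (fun n => ∀ i j : Fin d, i < j → n i < n j)

section AuxMHS

variable (p : ℕ) [Fact p.Prime]

private lemma mhs_aux_not_dvd {q rr : ℕ} (h1 : 1 ≤ rr) (h2 : rr ≤ p - 1) :
    ¬ p ∣ (p * q + rr) := by
  have hp := (Fact.out : p.Prime)
  have hrp : rr < p := lt_of_le_of_lt h2 (Nat.sub_lt hp.pos one_pos)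
  intro h
  have hdr : p ∣ rr := (Nat.dvd_add_right ⟨q, rfl⟩).mp h
  have := Nat.le_of_dvd (by omega) hdr
  omega

private lemma mhs_aux_val (v m : ℕ) (h : ¬ p ∣ m) (hm : 0 < m) :
    padicValNat p (p ^ v * m) = v := by
  have hp := (Fact.out : p.Prime)
  rw [padicValNat.mul (pow_ne_zero _ hp.pos.ne') hm.ne', padicValNat.prime_pow,
    padicValNat.eq_zero_of_not_dvd h, add_zero]

private lemma mhs_aux_norm_nat {m : ℕ} (h : ¬ p ∣ m) : ‖(m : ℚ_[p])‖ = 1 := by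
  refine le_antisymm (by exact_mod_cast Padic.norm_int_le_one (m : ℤ)) ?_
  by_contra hlt
  push_neg at hlt
  have := (Padic.norm_natCast_eq_one_iff (p := p) (n := m)).mpr
    ((Nat.Prime.coprime_iff_not_dvd Fact.out).mpr h)
  linarith

private lemma mhs_aux_euler (r : ℕ) (hr : 1 ≤ r) {M : ℕ} (h : ¬ p ∣ M) :
    ‖(1 : ℚ_[p]) - (M : ℚ_[p]) ^ ((p ^ (r - 1) * (p - 1) : ℤ))‖ ≤ (p : ℝ) ^ (-(r : ℤ)) := by
  have hp := (Fact.out : p.Prime)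
  have hE : ((p ^ (r - 1) * (p - 1) : ℤ)) = ((p ^ (r - 1) * (p - 1) : ℕ) : ℤ) := by
    push_cast [Nat.cast_sub hp.one_le]; ring
  set E : ℕ := p ^ (r - 1) * (p - 1) with hEdef
  rw [hE, zpow_natCast]
  have hcop : Nat.Coprime M (p ^ r) :=
    Nat.Coprime.pow_right _ ((Nat.Prime.coprime_iff_not_dvd hp).mpr h).symm
  have heuler : M ^ E ≡ 1 [MOD p ^ r] := by
    have := Nat.ModEq.pow_totient hcop
    rwa [Nat.totient_prime_pow hp hr] at this
  have hdvd : ((p : ℤ) ^ r) ∣ (1 - (M : ℤ) ^ E) := by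
    have := (Nat.modEq_iff_dvd (n := p ^ r)).mp heuler
    push_cast at this
    exact this
  calc ‖(1 : ℚ_[p]) - (M : ℚ_[p]) ^ E‖
      = ‖(((1 - (M : ℤ) ^ E : ℤ)) : ℚ_[p])‖ := by push_cast; ring_nf
    _ ≤ (p : ℝ) ^ (-(r : ℤ)) := (Padic.norm_int_le_pow_iff_dvd _ _).mpr hdvd

private lemma mhs_aux_dec (k : ℕ) (hk : 1 ≤ k) {n : ℕ} (h1 : 0 < n) (h2 : n < p ^ k) :
    p ^ padicValNat p n * (n / p ^ padicValNat p n) = n ∧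
      ¬ p ∣ (n / p ^ padicValNat p n) ∧ padicValNat p n < k ∧
      (n / p ^ padicValNat p n) / p < p ^ (k - 1) ∧
      1 ≤ (n / p ^ padicValNat p n) % p ∧ (n / p ^ padicValNat p n) % p ≤ p - 1 ∧
      p * ((n / p ^ padicValNat p n) / p) + (n / p ^ padicValNat p n) % p
        = n / p ^ padicValNat p n := by
  have hp := (Fact.out : p.Prime)
  set v := padicValNat p n with hv
  set m := n / p ^ v with hm
  have heq : p ^ v * m = n := by
    simpa [hm, hv, Nat.factorization_def _ hp] using Nat.ordProj_mul_ordCompl_eq_self n p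
  have hnd : ¬ p ∣ m := by
    simpa [hm, hv, Nat.factorization_def _ hp] using Nat.not_dvd_ordCompl hp h1.ne'
  have hmpos : 0 < m := by
    rcases Nat.eq_zero_or_pos m with h | h
    · exfalso; rw [h, mul_zero] at heq; omega
    · exact h
  have hvk : v < k := by
    have hdvd : p ^ v ∣ n := ⟨m, heq.symm⟩
    have hle : p ^ v ≤ n := Nat.le_of_dvd h1 hdvd
    have : p ^ v < p ^ k := lt_of_le_of_lt hle h2
    exact (Nat.pow_lt_pow_iff_right hp.one_lt).mp this
  have hmn : m ≤ n := Nat.le_of_dvd h1 ⟨p ^ v, by rw [mul_comm]; exact heq.symm⟩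
  have hqlt : m / p < p ^ (k - 1) := by
    rw [Nat.div_lt_iff_lt_mul hp.pos]
    have : p ^ (k - 1) * p = p ^ k := by
      rw [← pow_succ]; congr 1; omega
    omega
  have hmod1 : 1 ≤ m % p := by
    rcases Nat.eq_zero_or_pos (m % p) with h | h
    · exact absurd (Nat.dvd_of_mod_eq_zero h) hnd
    · exact h
  have hmodp : m % p < p := Nat.mod_lt _ hp.pos
  exact ⟨heq, hnd, hvk, hqlt, hmod1, by omega, by
    have := Nat.div_add_mod m p
    omega⟩

private lemma mhs_key_sum (k d : ℕ) (hk : 1 ≤ k) (s : Fin d → ℕ) :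
    ∑ n ∈ chainsN d (p ^ k), ∏ i, ((p : ℚ_[p]) ^ k) ^ s i * (1 / (n i : ℚ_[p]) ^ s i) =
      ∑ x ∈ (Fintype.piFinset fun _ : Fin d =>
            Finset.range k ×ˢ Finset.range (p ^ (k - 1)) ×ˢ Finset.Icc 1 (p - 1)).filter
          (fun x => (∀ i j : Fin d, i < j →
              p ^ (x i).1 * (p * (x i).2.1 + (x i).2.2) <
                p ^ (x j).1 * (p * (x j).2.1 + (x j).2.2)) ∧
            ∀ i, p ^ (x i).1 * (p * (x i).2.1 + (x i).2.2) < p ^ k),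
        ∏ i, ((p : ℚ_[p]) ^ (k - (x i).1)) ^ s i *
          (((p * (x i).2.1 + (x i).2.2 : ℕ)) : ℚ_[p]) ^ (-(s i : ℤ)) := by
  have hp := (Fact.out : p.Prime)
  refine Finset.sum_nbij'
    (fun n i => (padicValNat p (n i), (n i / p ^ padicValNat p (n i)) / p,
      (n i / p ^ padicValNat p (n i)) % p))
    (fun x i => p ^ (x i).1 * (p * (x i).2.1 + (x i).2.2)) ?_ ?_ ?_ ?_ ?_
  · -- membership: chains → T
    intro n hn
    simp only [chainsN, Finset.mem_filter, Fintype.mem_piFinset, Finset.mem_Ioo] at hn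
    obtain ⟨hmem, hchain⟩ := hn
    simp only [Finset.mem_filter, Fintype.mem_piFinset, Finset.mem_product, Finset.mem_range,
      Finset.mem_Icc]
    obtain fact := fun i => mhs_aux_dec p k hk (hmem i).1 (hmem i).2
    refine ⟨fun i => ⟨(fact i).2.2.1, (fact i).2.2.2.1, (fact i).2.2.2.2.1,
      (fact i).2.2.2.2.2.1⟩, fun i j hij => ?_, fun i => ?_⟩
    · rw [(fact i).2.2.2.2.2.2, (fact j).2.2.2.2.2.2, (fact i).1, (fact j).1]
      exact hchain i j hij
    · rw [(fact i).2.2.2.2.2.2, (fact i).1]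
      exact (hmem i).2
  · -- membership: T → chains
    intro x hx
    simp only [Finset.mem_filter, Fintype.mem_piFinset, Finset.mem_product, Finset.mem_range,
      Finset.mem_Icc] at hx
    obtain ⟨hmem, hchain, hlt⟩ := hx
    simp only [chainsN, Finset.mem_filter, Fintype.mem_piFinset, Finset.mem_Ioo]
    refine ⟨fun i => ⟨?_, hlt i⟩, hchain⟩
    have h1 := (hmem i).2.2.1
    exact Nat.mul_pos (pow_pos hp.pos _) (by omega)
  · -- left inverse
    intro n hn
    simp only [chainsN, Finset.mem_filter, Fintype.mem_piFinset, Finset.mem_Ioo] at hn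
    funext i
    obtain fact := mhs_aux_dec p k hk (hn.1 i).1 (hn.1 i).2
    simp only
    rw [fact.2.2.2.2.2.2, fact.1]
  · -- right inverse
    intro x hx
    simp only [Finset.mem_filter, Fintype.mem_piFinset, Finset.mem_product, Finset.mem_range,
      Finset.mem_Icc] at hx
    obtain ⟨hmem, -, -⟩ := hx
    funext i
    obtain ⟨hv, hq, hr1, hr2⟩ := hmem i
    have hnd : ¬ p ∣ (p * (x i).2.1 + (x i).2.2) := mhs_aux_not_dvd p hr1 hr2
    have hupos : 0 < p * (x i).2.1 + (x i).2.2 := by omega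
    have hval : padicValNat p (p ^ (x i).1 * (p * (x i).2.1 + (x i).2.2)) = (x i).1 :=
      mhs_aux_val p _ _ hnd hupos
    have hdiv : p ^ (x i).1 * (p * (x i).2.1 + (x i).2.2) / p ^ (x i).1
        = p * (x i).2.1 + (x i).2.2 :=
      Nat.mul_div_cancel_left _ (pow_pos hp.pos _)
    have hrlt : (x i).2.2 < p := by
      have := hp.one_lt; omega
    simp only [hval, hdiv]
    refine Prod.ext rfl (Prod.ext ?_ ?_)
    · simp only
      rw [Nat.mul_add_div hp.pos, Nat.div_eq_of_lt hrlt, add_zero]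
    · simp only
      rw [Nat.mul_add_mod, Nat.mod_eq_of_lt hrlt]
  · -- terms agree
    intro n hn
    simp only [chainsN, Finset.mem_filter, Fintype.mem_piFinset, Finset.mem_Ioo] at hn
    refine Finset.prod_congr rfl fun i _ => ?_
    obtain fact := mhs_aux_dec p k hk (hn.1 i).1 (hn.1 i).2
    set v := padicValNat p (n i) with hv
    set m := n i / p ^ v with hm
    have hmpos : 0 < m := by
      rcases Nat.eq_zero_or_pos m with h | h
      · exfalso; have := fact.1; rw [h, mul_zero] at this; have := (hn.1 i).1; omega
      · exact h
    simp only [fact.2.2.2.2.2.2]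
    have hcast : (n i : ℚ_[p]) = (p : ℚ_[p]) ^ v * (m : ℚ_[p]) := by
      exact_mod_cast congrArg (Nat.cast : ℕ → ℚ_[p]) fact.1.symm
    have hm0 : (m : ℚ_[p]) ≠ 0 := Nat.cast_ne_zero.mpr hmpos.ne'
    have hp0 : (p : ℚ_[p]) ≠ 0 := Nat.cast_ne_zero.mpr hp.pos.ne'
    have hpk : (p : ℚ_[p]) ^ k = (p : ℚ_[p]) ^ (k - v) * (p : ℚ_[p]) ^ v := by
      rw [← pow_add]; congr 1; omega
    rw [hcast, hpk, zpow_neg, zpow_natCast]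
    rw [show p * (n i / p ^ padicValNat p (n i) / p) + n i / p ^ padicValNat p (n i) % p = m
      from fact.2.2.2.2.2.2, ← hv]
    field_simp
    ring
  
end AuxMHS

/-- Congruence modulo `p^r` for `(p^k)^{s_1+⋯+s_d}·H_{p^k}(s_d,…,s_1)`: writing each index
uniquely as `n_i = p^{v_i}(pq_i+r_i)` with `v_i ∈ {0,…,k−1}`, `q_i ≥ 0`, `r_i ∈ {1,…,p−1}`,
the difference between `(p^k)^{s_1+⋯+s_d}·H_{p^k}(s_d,…,s_1)` and the finite sum over the
chains `0 < p^{v_1}(pq_1+r_1) < ⋯ < p^{v_d}(pq_d+r_d) < p^k` of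
`∏_i (p^{k−v_i})^{s_i}·(pq_i+r_i)^{p^{r−1}(p−1)−s_i}` has `p`-adic valuation at least `r`.
Each triple `(v_i,q_i,r_i)` is encoded as an element of `ℕ × ℕ × ℕ`. -/
theorem mhs_congruence_mod_p_pow (p : ℕ) [Fact p.Prime] (k d r : ℕ)
    (hk : 1 ≤ k) (hd : 1 ≤ d) (hr : 1 ≤ r) (s : Fin d → ℕ) (hs : ∀ i, 1 ≤ s i) :
    ‖((p : ℚ_[p]) ^ k) ^ (∑ i, s i) *
          (∑ n ∈ chainsN d (p ^ k), ∏ i, 1 / (n i : ℚ_[p]) ^ s i) -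
        ∑ x ∈ (Fintype.piFinset fun _ : Fin d =>
              Finset.range k ×ˢ Finset.range (p ^ (k - 1)) ×ˢ Finset.Icc 1 (p - 1)).filter
            (fun x => (∀ i j : Fin d, i < j →
                p ^ (x i).1 * (p * (x i).2.1 + (x i).2.2) <
                  p ^ (x j).1 * (p * (x j).2.1 + (x j).2.2)) ∧
              ∀ i, p ^ (x i).1 * (p * (x i).2.1 + (x i).2.2) < p ^ k),
          ∏ i, ((p : ℚ_[p]) ^ (k - (x i).1)) ^ (s i) *
            (((p * (x i).2.1 + (x i).2.2 : ℕ)) : ℚ_[p]) ^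
              ((p ^ (r - 1) * (p - 1) : ℤ) - (s i : ℤ))‖
      ≤ (p : ℝ) ^ (-(r : ℤ)) := by
  have hp := (Fact.out : p.Prime)
  have step1 : ((p : ℚ_[p]) ^ k) ^ (∑ i, s i) *
      (∑ n ∈ chainsN d (p ^ k), ∏ i, 1 / (n i : ℚ_[p]) ^ s i) =
      ∑ n ∈ chainsN d (p ^ k), ∏ i, ((p : ℚ_[p]) ^ k) ^ s i * (1 / (n i : ℚ_[p]) ^ s i) := by
    rw [Finset.mul_sum]
    refine Finset.sum_congr rfl fun n _ => ?_
    rw [Finset.prod_mul_distrib, Finset.prod_pow_eq_pow_sum]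
  rw [step1, mhs_key_sum p k d hk s, ← Finset.sum_sub_distrib]
  apply IsUltrametricDist.norm_sum_le_of_forall_le_of_nonneg (by positivity)
  intro x hx
  simp only [Finset.mem_filter, Fintype.mem_piFinset, Finset.mem_product, Finset.mem_range,
    Finset.mem_Icc] at hx
  obtain ⟨hmem, -, -⟩ := hx
  have hnd : ∀ i, ¬ p ∣ (p * (x i).2.1 + (x i).2.2) := fun i =>
    mhs_aux_not_dvd p (hmem i).2.2.1 (hmem i).2.2.2
  have hu0 : ∀ i, ((p * (x i).2.1 + (x i).2.2 : ℕ) : ℚ_[p]) ≠ 0 := fun i =>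
    Nat.cast_ne_zero.mpr (by have := (hmem i).2.2.1; omega)
  set E : ℤ := (p ^ (r - 1) * (p - 1) : ℤ) with hE
  have hsplit : ∀ i, ((p * (x i).2.1 + (x i).2.2 : ℕ) : ℚ_[p]) ^ (E - (s i : ℤ))
      = ((p * (x i).2.1 + (x i).2.2 : ℕ) : ℚ_[p]) ^ (-(s i : ℤ)) *
        ((p * (x i).2.1 + (x i).2.2 : ℕ) : ℚ_[p]) ^ E := by
    intro i
    rw [← zpow_add₀ (hu0 i)]
    congr 1
    ring
  have hprod : (∏ i, ((p : ℚ_[p]) ^ (k - (x i).1)) ^ (s i) *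
      ((p * (x i).2.1 + (x i).2.2 : ℕ) : ℚ_[p]) ^ (E - (s i : ℤ)))
      = (∏ i, ((p : ℚ_[p]) ^ (k - (x i).1)) ^ (s i) *
          ((p * (x i).2.1 + (x i).2.2 : ℕ) : ℚ_[p]) ^ (-(s i : ℤ))) *
        ((∏ i, (p * (x i).2.1 + (x i).2.2 : ℕ) : ℕ) : ℚ_[p]) ^ E := by
    calc ∏ i, ((p : ℚ_[p]) ^ (k - (x i).1)) ^ (s i) *
        ((p * (x i).2.1 + (x i).2.2 : ℕ) : ℚ_[p]) ^ (E - (s i : ℤ))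
        = ∏ i, (((p : ℚ_[p]) ^ (k - (x i).1)) ^ (s i) *
            ((p * (x i).2.1 + (x i).2.2 : ℕ) : ℚ_[p]) ^ (-(s i : ℤ))) *
            ((p * (x i).2.1 + (x i).2.2 : ℕ) : ℚ_[p]) ^ E := by
          refine Finset.prod_congr rfl fun i _ => ?_
          rw [hsplit i]; ring
      _ = (∏ i, ((p : ℚ_[p]) ^ (k - (x i).1)) ^ (s i) *
            ((p * (x i).2.1 + (x i).2.2 : ℕ) : ℚ_[p]) ^ (-(s i : ℤ))) *
            ∏ i, ((p * (x i).2.1 + (x i).2.2 : ℕ) : ℚ_[p]) ^ E := Finset.prod_mul_distrib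
      _ = _ := by rw [Finset.prod_zpow, ← Nat.cast_prod]
  rw [hprod]
  set A : ℚ_[p] := ∏ i, ((p : ℚ_[p]) ^ (k - (x i).1)) ^ (s i) *
    ((p * (x i).2.1 + (x i).2.2 : ℕ) : ℚ_[p]) ^ (-(s i : ℤ)) with hA
  set M : ℕ := ∏ i, (p * (x i).2.1 + (x i).2.2) with hM
  have hAM : A - A * (M : ℚ_[p]) ^ E = A * (1 - (M : ℚ_[p]) ^ E) := by ring
  rw [hAM, norm_mul]
  have hAnorm : ‖A‖ ≤ 1 := by
    rw [hA, norm_prod]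
    refine Finset.prod_le_one (fun i _ => norm_nonneg _) fun i _ => ?_
    rw [norm_mul, norm_pow, norm_pow, zpow_neg, norm_inv, norm_zpow,
      mhs_aux_norm_nat p (hnd i)]
    simp only [one_zpow, inv_one, mul_one]
    refine pow_le_one₀ (pow_nonneg (norm_nonneg _) _) (pow_le_one₀ (norm_nonneg _) ?_)
    rw [Padic.norm_p]
    exact inv_le_one_of_one_le₀ (by exact_mod_cast hp.one_le)
  have hMnd : ¬ p ∣ M := by
    rw [hM]
    intro h
    obtain ⟨i, -, hi⟩ := (hp.prime.dvd_finset_prod_iff _).mp h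
    exact hnd i hi
  have hE2 : ‖(1 : ℚ_[p]) - (M : ℚ_[p]) ^ E‖ ≤ (p : ℝ) ^ (-(r : ℤ)) :=
    mhs_aux_euler p r hr hMnd
  calc ‖A‖ * ‖1 - (M : ℚ_[p]) ^ E‖ ≤ 1 * ((p : ℝ) ^ (-(r : ℤ))) :=
        mul_le_mul hAnorm hE2 (norm_nonneg _) zero_le_one
    _ = (p : ℝ) ^ (-(r : ℤ)) := one_mul _
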